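/- Let R be a ℤ-graded commutative ring and M, N ℤ-graded R-modules with N Noetherian. Let h ∈ Hom_R(N, M) be homogeneous of some degree. Then h is injective if and only if for every associated prime p of N (necessarily a graded ideal), the homogeneous localization h_{(p)} restricted to Soc_{R_{(p)}}(N_{(p)}) is injective. -/

import Mathlib

private lemma noeth_quot_ann {R N : Type*} [CommRing R] [AddCommGroup N] [Module R N]
    [IsNoetherian R N] : IsNoetherian R (R ⧸ Module.annihilator R N) := by
  obtain ⟨n, f, hf⟩ := Module.Finite.exists_fin (R := R) (M := N)
  let φ : R →ₗ[R] (Fin n → N) := LinearMap.pi fun i => LinearMap.toSpanSingleton R N (f i)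
  have hker : LinearMap.ker φ = Module.annihilator R N := by
    ext r
    simp only [LinearMap.mem_ker, Module.mem_annihilator, funext_iff, LinearMap.pi_apply,
      LinearMap.toSpanSingleton_apply, Pi.zero_apply, φ]
    constructor
    · intro H x
      have hx : x ∈ Submodule.span R (Set.range f) := hf ▸ Submodule.mem_top
      induction hx using Submodule.span_induction with
      | mem y hy => obtain ⟨i, rfl⟩ := hy; exact H i
      | zero => simp
      | add y z _ _ hy hz => rw [smul_add, hy, hz, add_zero]
      | smul c y _ hy => rw [smul_comm, hy, smul_zero]
    · intro H i; exact H (f i)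
  have : IsNoetherian R (R ⧸ LinearMap.ker φ) :=
    isNoetherian_of_linearEquiv φ.quotKerEquivRange.symm
  rwa [hker] at this

private lemma exists_assoc_ann {R N : Type*} [CommRing R] [AddCommGroup N] [Module R N]
    [IsNoetherian R N] (K : Submodule R N) (x : N) (hx : x ∈ K) (hx0 : x ≠ 0) :
    ∃ y : N, y ∈ K ∧ y ≠ 0 ∧ IsAssociatedPrime ((R ∙ y).annihilator) N := by
  set A := Module.annihilator R N with hA
  have hAle : ∀ z : N, A ≤ (R ∙ z).annihilator := by
    intro z r hr
    rw [Submodule.mem_annihilator_span_singleton]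
    exact Module.mem_annihilator.mp hr z
  haveI : IsNoetherian R (R ⧸ A) := noeth_quot_ann
  set S : Set (Ideal R) := {I | ∃ y ∈ K, y ≠ 0 ∧ I = (R ∙ y).annihilator} with hS
  set T : Set (Submodule R (R ⧸ A)) := (Submodule.map A.mkQ) '' S with hT
  obtain ⟨J, hJT, hJmax⟩ := set_has_maximal_iff_noetherian.mpr ‹IsNoetherian R (R ⧸ A)› T
    ⟨_, ⟨(R ∙ x).annihilator, ⟨x, hx, hx0, rfl⟩, rfl⟩⟩
  obtain ⟨P, ⟨y, hyK, hy0, rfl⟩, rfl⟩ := hJT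
  -- maximality of (R ∙ y).annihilator in S
  have hmax : ∀ I ∈ S, (R ∙ y).annihilator ≤ I → I = (R ∙ y).annihilator := by
    intro I hI hle
    have h1 : Submodule.map A.mkQ ((R ∙ y).annihilator) ≤ Submodule.map A.mkQ I :=
      Submodule.map_mono hle
    have h2 : Submodule.map A.mkQ ((R ∙ y).annihilator) = Submodule.map A.mkQ I := by
      by_contra hne
      exact hJmax _ ⟨I, hI, rfl⟩ (lt_of_le_of_ne h1 hne)
    have h3 : ∀ I' : Ideal R, A ≤ I' →
        Submodule.comap A.mkQ (Submodule.map A.mkQ I') = I' := by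
      intro I' hI'
      rw [Submodule.comap_map_eq, Submodule.ker_mkQ, sup_eq_left.mpr hI']
    calc I = Submodule.comap A.mkQ (Submodule.map A.mkQ I) := (h3 I (le_trans (hAle y) hle)).symm
      _ = Submodule.comap A.mkQ (Submodule.map A.mkQ ((R ∙ y).annihilator)) := by rw [h2]
      _ = (R ∙ y).annihilator := h3 _ (hAle y)
  refine ⟨y, hyK, hy0, ?_⟩
  suffices hprime : ((R ∙ y).annihilator).IsPrime by
    have hcol : (⊥ : Submodule R N).colon {y} = (R ∙ y).annihilator := by
      ext r
      rw [Submodule.mem_colon_singleton, Submodule.mem_annihilator_span_singleton, Submodule.mem_bot]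
    show (⊥ : Submodule R N).IsAssociatedPrime _
    exact { toIsPrime := hprime, eq_radical_colon := ⟨y, by rw [hcol, hprime.radical]⟩ }
  refine ⟨?_, ?_⟩
  · intro htop
    have : (1 : R) ∈ (R ∙ y).annihilator := htop ▸ Submodule.mem_top
    rw [Submodule.mem_annihilator_span_singleton, one_smul] at this
    exact hy0 this
  · intro a b hab
    rw [or_iff_not_imp_left]
    intro ha
    rw [Submodule.mem_annihilator_span_singleton] at ha hab ⊢
    have hay0 : a • y ≠ 0 := ha
    have hle : (R ∙ y).annihilator ≤ (R ∙ a • y).annihilator := by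
      intro c hc
      rw [Submodule.mem_annihilator_span_singleton] at hc ⊢
      rw [smul_comm, hc, smul_zero]
    have heq := hmax _ ⟨a • y, K.smul_mem a hyK, hay0, rfl⟩ hle
    have hb : b ∈ (R ∙ a • y).annihilator := by
      rw [Submodule.mem_annihilator_span_singleton, smul_smul, mul_comm, hab]
    rw [heq, Submodule.mem_annihilator_span_singleton] at hb
    exact hb

theorem stmt_17 {R M N : Type*} [CommRing R]
    [AddCommGroup M] [Module R M] [AddCommGroup N] [Module R N]
    (𝒜 : ℤ → Submodule ℤ R) [GradedRing 𝒜]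
    (ℳ : ℤ → Submodule ℤ M) [SetLike.GradedSMul 𝒜 ℳ] [DirectSum.Decomposition ℳ]
    (𝒩 : ℤ → Submodule ℤ N) [SetLike.GradedSMul 𝒜 𝒩] [DirectSum.Decomposition 𝒩]
    [IsNoetherian R N]
    (h : N →ₗ[R] M) (i : ℤ) (hh : ∀ j : ℤ, ∀ x ∈ 𝒩 j, h x ∈ ℳ (i + j)) :
    Function.Injective h ↔
      ∀ (p : Ideal R) [p.IsPrime], p ∈ associatedPrimes R N →
        ∀ x : LocalizedModule (SetLike.homogeneousSubmonoid 𝒜 ⊓ p.primeCompl) N,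
          (∀ a ∈ p, a • x = 0) →
          IsLocalizedModule.map (SetLike.homogeneousSubmonoid 𝒜 ⊓ p.primeCompl)
            (LocalizedModule.mkLinearMap (SetLike.homogeneousSubmonoid 𝒜 ⊓ p.primeCompl) N)
            (LocalizedModule.mkLinearMap (SetLike.homogeneousSubmonoid 𝒜 ⊓ p.primeCompl) M)
            h x = 0 →
          x = 0 := by
  constructor
  · intro hinj p _ hp x hx hmap
    induction x using LocalizedModule.induction_on with
    | h n s =>
      rw [IsLocalizedModule.map_LocalizedModules] at hmap
      rw [IsLocalizedModule.mk_eq_mk', IsLocalizedModule.mk'_eq_zero'] at hmap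
      obtain ⟨s', hs'⟩ := hmap
      rw [Submonoid.smul_def] at hs'
      have : h ((s' : R) • n) = 0 := by rw [map_smul]; exact hs'
      have hn : s' • n = 0 := by
        rw [Submonoid.smul_def]
        exact hinj (by rw [this, map_zero])
      rw [IsLocalizedModule.mk_eq_mk', IsLocalizedModule.mk'_eq_zero']
      exact ⟨s', hn⟩
  · intro H
    rw [← LinearMap.ker_eq_bot]
    by_contra hker
    obtain ⟨y0, hy0K, hy00⟩ := Submodule.exists_mem_ne_zero_of_ne_bot hker
    obtain ⟨y, hyK, hy0, hP⟩ := exists_assoc_ann (LinearMap.ker h) y0 hy0K hy00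
    set p : Ideal R := (R ∙ y).annihilator with hp
    haveI : p.IsPrime := hP.1
    have hpmem : p ∈ associatedPrimes R N := hP
    set Sm := SetLike.homogeneousSubmonoid 𝒜 ⊓ p.primeCompl with hSm
    have hx0 : (LocalizedModule.mk y (1 : Sm)) = 0 := by
      refine H p hpmem _ ?_ ?_
      · intro a ha
        rw [LocalizedModule.smul'_mk]
        rw [Submodule.mem_annihilator_span_singleton] at ha
        rw [ha, LocalizedModule.zero_mk]
      · rw [IsLocalizedModule.map_LocalizedModules]
        have : h y = 0 := hyK
        rw [this, LocalizedModule.zero_mk]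
    rw [IsLocalizedModule.mk_eq_mk', IsLocalizedModule.mk'_eq_zero'] at hx0
    obtain ⟨s', hs'⟩ := hx0
    have hsp : (s' : R) ∈ p := by
      rw [Submodule.mem_annihilator_span_singleton]
      exact hs'
    exact s'.2.2 hsp
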